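/- Every discrete META A with a distinguished location lf can be effectively extended to a discrete META A' — obtained by adding a fresh private location reachable from the initial location with unguarded self-loops incrementing each energy variable, a fresh location l1 reachable from lf, and a fresh final location reachable without guard from both the private location and l1 — such that A' is ∃-ET-EN-opaque if and only if lf is reachable in A. Hence reachability in discrete METAs reduces to ∃-ET-EN-opacity. -/

import Mathlib

namespace METAOpacity

open scoped Classical

/-- An inequality `v ⋈ d`: a variable index (clocks first, then energy variables),
a comparison code (`0` = `<`, `1` = `≤`, `2` = `≥`, `3` = `>`) and an integer constant. -/
abbrev Ineq : Type := ℕ × ℕ × ℤ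

/-- An edge: source location, guard, action (`none` = ε), clock resets,
integer energy updates, target location. -/
abbrev Edge : Type := ℕ × List Ineq × Option ℕ × List ℕ × List ℤ × ℕ

/-- A finitely presented guarded multi-energy timed automaton (guarded META):
number of actions, number of locations (location `0` is the initial one), number of
clocks, number of energy variables, list of private locations, list of final locations,
invariants (one per location), integer energy rates (one list per location, one entry per
energy variable), and edges.  Being a nested product of countable discrete data, this
type is `Primcodable`, so computability of functions on it makes sense. -/
abbrev GMETA : Type :=
  ℕ × ℕ × ℕ × ℕ × List ℕ × List ℕ × List (List Ineq) × List (List ℤ) × List Edge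

def numAct (A : GMETA) : ℕ := A.1
def numLoc (A : GMETA) : ℕ := A.2.1
def numClk (A : GMETA) : ℕ := A.2.2.1
def numEn (A : GMETA) : ℕ := A.2.2.2.1
def privLocs (A : GMETA) : List ℕ := A.2.2.2.2.1
def finalLocs (A : GMETA) : List ℕ := A.2.2.2.2.2.1
def invs (A : GMETA) : List (List Ineq) := A.2.2.2.2.2.2.1
def rates (A : GMETA) : List (List ℤ) := A.2.2.2.2.2.2.2.1
def edges (A : GMETA) : List Edge := A.2.2.2.2.2.2.2.2

def edgeSrc (e : Edge) : ℕ := e.1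
def edgeGuard (e : Edge) : List Ineq := e.2.1
def edgeAct (e : Edge) : Option ℕ := e.2.2.1
def edgeResets (e : Edge) : List ℕ := e.2.2.2.1
def edgeUpdates (e : Edge) : List ℤ := e.2.2.2.2.1
def edgeTgt (e : Edge) : ℕ := e.2.2.2.2.2

/-- A semantic state: location, clock valuation, energy valuation. -/
abbrev EState : Type := ℕ × (ℕ → ℝ) × (ℕ → ℝ)

def initState : EState := (0, fun _ => 0, fun _ => 0)

/-- Satisfaction of a single comparison. -/
def cmpSat (c : ℕ) (x : ℝ) (d : ℤ) : Prop :=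
  if c = 0 then x < (d : ℝ)
  else if c = 1 then x ≤ (d : ℝ)
  else if c = 2 then (d : ℝ) ≤ x
  else if c = 3 then (d : ℝ) < x
  else False

/-- Value of variable `i` (a clock if `i < numClk A`, an energy variable otherwise). -/
def varVal (A : GMETA) (w v : ℕ → ℝ) (i : ℕ) : ℝ :=
  if i < numClk A then w i else v (i - numClk A)

/-- Satisfaction of a conjunction of inequalities. -/
def satIneqs (A : GMETA) (w v : ℕ → ℝ) (g : List Ineq) : Prop :=
  ∀ q ∈ g, cmpSat q.2.1 (varVal A w v q.1) q.2.2

def invOf (A : GMETA) (l : ℕ) : List Ineq := (invs A).getD l []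

def rateOf (A : GMETA) (l i : ℕ) : ℤ := ((rates A).getD l []).getD i 0

/-- A state is valid when its location exists, clocks and energies are non-negative,
and the invariant of the current location holds. -/
def validState (A : GMETA) (s : EState) : Prop :=
  s.1 < numLoc A ∧ (∀ i, 0 ≤ s.2.1 i) ∧ (∀ i, 0 ≤ s.2.2 i) ∧
    satIneqs A s.2.1 s.2.2 (invOf A s.1)

def elapseClocks (w : ℕ → ℝ) (t : ℝ) : ℕ → ℝ := fun i => w i + t

def elapseEnergies (A : GMETA) (l : ℕ) (v : ℕ → ℝ) (t : ℝ) : ℕ → ℝ :=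
  fun i => v i + (rateOf A l i : ℝ) * t

def resetClocks (R : List ℕ) (w : ℕ → ℝ) : ℕ → ℝ := fun i => if i ∈ R then 0 else w i

def updateEnergies (U : List ℤ) (v : ℕ → ℝ) : ℕ → ℝ := fun i => v i + ((U.getD i 0 : ℤ) : ℝ)

/-- Timestamped traces of a guarded META, written in *reverse* chronological order
(the head of the list is the last state together with its absolute time).  Each step
consists of a delay (during which all intermediate states must be valid) followed by
the firing of an edge whose guard holds. -/
inductive Trace (A : GMETA) : List (EState × ℝ) → Prop where
  | init :
      validState A initState →
      Trace A [(initState, 0)]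
  | step {tr : List (EState × ℝ)} {l : ℕ} {w v : ℕ → ℝ} {τ : ℝ} (t : ℝ) (e : Edge) :
      Trace A (((l, w, v), τ) :: tr) →
      0 ≤ t →
      (∀ t', 0 ≤ t' → t' ≤ t →
        validState A (l, elapseClocks w t', elapseEnergies A l v t')) →
      e ∈ edges A →
      edgeSrc e = l →
      satIneqs A (elapseClocks w t) (elapseEnergies A l v t) (edgeGuard e) →
      validState A (edgeTgt e, resetClocks (edgeResets e) (elapseClocks w t),
        updateEnergies (edgeUpdates e) (elapseEnergies A l v t)) →
      Trace A (((edgeTgt e, resetClocks (edgeResets e) (elapseClocks w t),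
        updateEnergies (edgeUpdates e) (elapseEnergies A l v t)), τ + t)
          :: ((l, w, v), τ) :: tr)

/-- Duration of a run (absolute time of its last state). -/
def runDur (tr : List (EState × ℝ)) : ℝ := tr.headI.2

/-- Last location of a run. -/
def runLoc (tr : List (EState × ℝ)) : ℕ := tr.headI.1.1

/-- Final energies of a run. -/
def runEnergy (tr : List (EState × ℝ)) : ℕ → ℝ := tr.headI.1.2.2

/-- A private run: reaches a final location after having visited a private location. -/
def PrivRun (A : GMETA) (tr : List (EState × ℝ)) : Prop :=
  Trace A tr ∧ runLoc tr ∈ finalLocs A ∧ ∃ p ∈ tr, p.1.1 ∈ privLocs A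

/-- A public run: reaches a final location without ever visiting a private location. -/
def PubRun (A : GMETA) (tr : List (EState × ℝ)) : Prop :=
  Trace A tr ∧ runLoc tr ∈ finalLocs A ∧ ∀ p ∈ tr, p.1.1 ∉ privLocs A

/-- Final energies of private runs. -/
def EVpriv (A : GMETA) : Set (ℕ → ℝ) := {v | ∃ tr, PrivRun A tr ∧ runEnergy tr = v}

/-- Final energies of public runs. -/
def EVpub (A : GMETA) : Set (ℕ → ℝ) := {v | ∃ tr, PubRun A tr ∧ runEnergy tr = v}

/-- Durations of private runs. -/
def DTpriv (A : GMETA) : Set ℝ := {d | ∃ tr, PrivRun A tr ∧ runDur tr = d}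

/-- Durations of public runs. -/
def DTpub (A : GMETA) : Set ℝ := {d | ∃ tr, PubRun A tr ∧ runDur tr = d}

/-- Pairs (duration, final energies) of private runs. -/
def DEVpriv (A : GMETA) : Set (ℝ × (ℕ → ℝ)) :=
  {p | ∃ tr, PrivRun A tr ∧ runDur tr = p.1 ∧ runEnergy tr = p.2}

/-- Pairs (duration, final energies) of public runs. -/
def DEVpub (A : GMETA) : Set (ℝ × (ℕ → ℝ)) :=
  {p | ∃ tr, PubRun A tr ∧ runDur tr = p.1 ∧ runEnergy tr = p.2}

/-- The three variants of opacity: existential, weak, full. -/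
inductive Var3 where
  | ex : Var3
  | weak : Var3
  | full : Var3

/-- δ-EN-opacity. -/
def ENOpaque : Var3 → GMETA → Prop
  | .ex, A => (EVpriv A ∩ EVpub A).Nonempty
  | .weak, A => EVpriv A ⊆ EVpub A
  | .full, A => EVpriv A = EVpub A

/-- δ-ET-EN-opacity. -/
def ETENOpaque : Var3 → GMETA → Prop
  | .ex, A => (DEVpriv A ∩ DEVpub A).Nonempty
  | .weak, A => DEVpriv A ⊆ DEVpub A
  | .full, A => DEVpriv A = DEVpub A

/-- The two observation kinds: final energies only (EN), or duration and final
energies (ET-EN). -/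
inductive Sig2 where
  | en : Sig2
  | eten : Sig2

/-- δ-σ-opacity. -/
def Opq : Var3 → Sig2 → GMETA → Prop
  | δ, .en, A => ENOpaque δ A
  | δ, .eten, A => ETENOpaque δ A

/-- Energy level of a (reverse chronological) run at absolute time `t`: the energy
valuation of the last state reached at absolute time at most `t` (the zero valuation
if there is no such state). -/
noncomputable def ELat : List (EState × ℝ) → ℝ → (ℕ → ℝ)
  | [], _ => fun _ => 0
  | p :: rest, t => if p.2 ≤ t then p.1.2.2 else ELat rest t

/-- Discrete energy observation: energy levels at times `1, …, ⌈duration⌉`. -/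
noncomputable def DEO (tr : List (EState × ℝ)) : List (ℕ → ℝ) :=
  (List.range (Nat.ceil (runDur tr))).map (fun k => ELat tr ((k : ℝ) + 1))

/-- δ-DE-opacity. -/
def DEOpaque : Var3 → GMETA → Prop
  | .ex, A => ∃ tr tr', PrivRun A tr ∧ PubRun A tr' ∧ DEO tr = DEO tr'
  | .weak, A => ∀ tr, PrivRun A tr → ∃ tr', PubRun A tr' ∧ DEO tr = DEO tr'
  | .full, A => (∀ tr, PrivRun A tr → ∃ tr', PubRun A tr' ∧ DEO tr = DEO tr') ∧
      (∀ tr, PubRun A tr → ∃ tr', PrivRun A tr' ∧ DEO tr' = DEO tr)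

/-- Keeps, from a chronological sequence of timestamped energy valuations, exactly the
valuations that change at least one energy variable (w.r.t.\ the previous valuation,
given as first argument). -/
noncomputable def energyChangesAux : (ℕ → ℝ) → List ((ℕ → ℝ) × ℝ) → List ((ℕ → ℝ) × ℝ)
  | _, [] => []
  | prev, p :: rest =>
      if p.1 = prev then energyChangesAux prev rest else p :: energyChangesAux p.1 rest

/-- Timestamped energy changes of a run, in chronological order. -/
noncomputable def energyChanges (tr : List (EState × ℝ)) : List ((ℕ → ℝ) × ℝ) :=
  energyChangesAux (fun _ => 0) (tr.reverse.map (fun p => (p.1.2.2, p.2)))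

/-- Buffered energy level at integer time `τ ≥ 1`: the sequence of successive energy
valuations taken at absolute timestamps in `(τ − 1, τ]` (in `[0, 1]` for `τ = 1`),
keeping only the valuations that change at least one energy variable. -/
noncomputable def bEL (tr : List (EState × ℝ)) (τ : ℕ) : List (ℕ → ℝ) :=
  ((energyChanges tr).filter
    (fun p => decide ((τ = 1 ∨ (τ : ℝ) - 1 < p.2) ∧ p.2 ≤ (τ : ℝ)))).map Prod.fst

/-- Buffered discrete energy observation: `bEL` at times `1, …, ⌈duration⌉`. -/
noncomputable def bDEO (tr : List (EState × ℝ)) : List (List (ℕ → ℝ)) :=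
  (List.range (Nat.ceil (runDur tr))).map (fun k => bEL tr (k + 1))

/-- δ-bDE-opacity. -/
def bDEOpaque : Var3 → GMETA → Prop
  | .ex, A => ∃ tr tr', PrivRun A tr ∧ PubRun A tr' ∧ bDEO tr = bDEO tr'
  | .weak, A => ∀ tr, PrivRun A tr → ∃ tr', PubRun A tr' ∧ bDEO tr = bDEO tr'
  | .full, A => (∀ tr, PrivRun A tr → ∃ tr', PubRun A tr' ∧ bDEO tr = bDEO tr') ∧
      (∀ tr, PubRun A tr → ∃ tr', PrivRun A tr' ∧ bDEO tr' = bDEO tr)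

/-- Basic well-formedness of the presentation: the initial location exists, private and
final locations are non-empty sets of locations, final locations are not private and
have no outgoing edge, invariant and rate lists have the right lengths, and all indices
are in range. -/
def WellFormed (A : GMETA) : Prop :=
  0 < numLoc A ∧
  privLocs A ≠ [] ∧
  finalLocs A ≠ [] ∧
  (∀ l ∈ privLocs A, l < numLoc A) ∧
  (∀ l ∈ finalLocs A, l < numLoc A ∧ l ∉ privLocs A) ∧
  (invs A).length = numLoc A ∧
  (∀ g ∈ invs A, ∀ q ∈ g, q.1 < numClk A + numEn A) ∧
  (rates A).length = numLoc A ∧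
  (∀ r ∈ rates A, r.length = numEn A) ∧
  (∀ e ∈ edges A, edgeSrc e < numLoc A ∧ edgeTgt e < numLoc A ∧
    edgeSrc e ∉ finalLocs A ∧
    (∀ a, edgeAct e = some a → a < numAct A) ∧
    (∀ q ∈ edgeGuard e, q.1 < numClk A + numEn A) ∧
    (∀ x ∈ edgeResets e, x < numClk A) ∧
    (edgeUpdates e).length = numEn A)

/-- Discrete: all energy rates are `0` (energy changes only via edge updates). -/
def Discrete (A : GMETA) : Prop := ∀ r ∈ rates A, ∀ z ∈ r, z = 0

/-- Positive: all energy rates and all energy updates are non-negative. -/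
def Positive (A : GMETA) : Prop :=
  (∀ r ∈ rates A, ∀ z ∈ r, 0 ≤ z) ∧ ∀ e ∈ edges A, ∀ z ∈ edgeUpdates e, 0 ≤ z

/-- META (as opposed to *guarded* META): guards and invariants constrain clocks only. -/
def ClockGuardsOnly (A : GMETA) : Prop :=
  (∀ g ∈ invs A, ∀ q ∈ g, q.1 < numClk A) ∧
    ∀ e ∈ edges A, ∀ q ∈ edgeGuard e, q.1 < numClk A

/-- Integer-switching: along every run, any edge whose target location has a different
energy rate than its source (for some energy variable) is taken at an integer absolute
time. -/
def IntegerSwitching (A : GMETA) : Prop :=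
  ∀ (s' : EState) (τ' : ℝ) (s : EState) (τ : ℝ) (rest : List (EState × ℝ)),
    Trace A ((s', τ') :: (s, τ) :: rest) →
    (∃ i < numEn A, rateOf A s.1 i ≠ rateOf A s'.1 i) →
    ∃ n : ℕ, τ' = (n : ℝ)

/-- Integer execution-time: every run reaching a final location has integer duration. -/
def IntegerET (A : GMETA) : Prop :=
  ∀ tr, Trace A tr → runLoc tr ∈ finalLocs A → ∃ n : ℕ, runDur tr = (n : ℝ)

/-- Some run of `A` reaches a state with location `l`. -/
def ReachLoc (A : GMETA) (l : ℕ) : Prop :=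
  ∃ tr p, Trace A tr ∧ p ∈ tr ∧ p.1.1 = l

/-- Some run of `A` of duration exactly `T` ends in location `l`. -/
def ReachLocInTime (A : GMETA) (l : ℕ) (T : ℕ) : Prop :=
  ∃ tr, Trace A tr ∧ runLoc tr = l ∧ runDur tr = (T : ℝ)

/-- A problem `P` over guarded METAs is decidable on the class `C` when some computable
(Boolean-valued, hence total) function decides it on every automaton of the class. -/
def DecidableOn (C P : GMETA → Prop) : Prop :=
  ∃ f : GMETA → Bool, Computable f ∧ ∀ A, C A → (f A = true ↔ P A)


/-! ### Space-bounded decidability, via Turing machines -/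

/-- Binary presentation of a guarded META on the tape alphabet `Option Bool`. -/
def tapeInput (A : GMETA) : List (Option Bool) := (Nat.bits (Encodable.encode A)).map some

/-- One-step relation of a (deterministic) Turing machine. -/
def TMStep {Λ : Type} [Inhabited Λ]
    (M : Turing.TM0.Machine (Option Bool) Λ) (a b : Turing.TM0.Cfg (Option Bool) Λ) : Prop :=
  Turing.TM0.step M a = some b

/-- `P` is decided on the class `C` by a Turing machine using at most `S n` tape cells
on inputs of length `n`: on every input of the class the machine halts, the halting
configuration reads `some true` at the head iff `P` holds, and every reachable
configuration is blank except within distance `S n` of the head. -/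
def DecidesInSpace (S : ℕ → ℕ) (C P : GMETA → Prop) : Prop :=
  ∃ (Λ : Type) (_ : Inhabited Λ) (_ : Fintype Λ),
  ∃ M : Turing.TM0.Machine (Option Bool) Λ,
    ∀ A : GMETA, C A →
      (∃ c, Relation.ReflTransGen (TMStep M) (Turing.TM0.init (tapeInput A)) c ∧
        Turing.TM0.step M c = none ∧ (c.Tape.head = some true ↔ P A)) ∧
      ∀ c, Relation.ReflTransGen (TMStep M) (Turing.TM0.init (tapeInput A)) c →
        ∀ i : ℤ, (S (tapeInput A).length : ℤ) < |i| → c.Tape.nth i = none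

/-- Membership in `EXPSPACE`, relative to the class `C`. -/
def InEXPSPACEOn (C P : GMETA → Prop) : Prop :=
  ∃ k : ℕ, DecidesInSpace (fun n => 2 ^ (n ^ k + k)) C P

/-- Membership in `2EXPSPACE`, relative to the class `C`. -/
def In2EXPSPACEOn (C P : GMETA → Prop) : Prop :=
  ∃ k : ℕ, DecidesInSpace (fun n => 2 ^ 2 ^ (n ^ k + k)) C P

/-- Membership in `3EXPSPACE`, relative to the class `C`. -/
def In3EXPSPACEOn (C P : GMETA → Prop) : Prop :=
  ∃ k : ℕ, DecidesInSpace (fun n => 2 ^ 2 ^ 2 ^ (n ^ k + k)) C P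


/-! ### Auxiliary construction for the reduction -/

section Reduction

def zerosU (m : ℕ) : List ℤ := (List.range m).map fun _ => 0

def unitU (m j : ℕ) : List ℤ := (List.range m).map fun i => if i = j then 1 else 0

def e0E (A : GMETA) : Edge := (0, [], none, [], zerosU (numEn A), numLoc A)
def eLoopE (A : GMETA) (j : ℕ) : Edge :=
  (numLoc A, [], none, [], unitU (numEn A) j, numLoc A)
def ePFE (A : GMETA) : Edge := (numLoc A, [], none, [], zerosU (numEn A), numLoc A + 2)
def eLFE (A : GMETA) (lf : ℕ) : Edge := (lf, [], none, [], zerosU (numEn A), numLoc A + 1)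
def e1FE (A : GMETA) : Edge :=
  (numLoc A + 1, [], none, [], zerosU (numEn A), numLoc A + 2)

def extEdges (A : GMETA) (lf : ℕ) : List Edge :=
  edges A ++ (e0E A :: ((List.range (numEn A)).map (eLoopE A) ++ [ePFE A, eLFE A lf, e1FE A]))

def gFun : GMETA × ℕ → GMETA := fun p =>
  (numAct p.1, numLoc p.1 + 3, numClk p.1, numEn p.1, [numLoc p.1], [numLoc p.1 + 2],
    invs p.1 ++ [[], [], []],
    rates p.1 ++ [zerosU (numEn p.1), zerosU (numEn p.1), zerosU (numEn p.1)],
    extEdges p.1 p.2)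

variable {A : GMETA} {lf : ℕ}

lemma numLoc_g : numLoc (gFun (A, lf)) = numLoc A + 3 := rfl
lemma invs_g : invs (gFun (A, lf)) = invs A ++ [[], [], []] := rfl
lemma rates_g : rates (gFun (A, lf)) =
    rates A ++ [zerosU (numEn A), zerosU (numEn A), zerosU (numEn A)] := rfl
lemma edges_g : edges (gFun (A, lf)) = extEdges A lf := rfl
lemma finalLocs_g : finalLocs (gFun (A, lf)) = [numLoc A + 2] := rfl
lemma privLocs_g : privLocs (gFun (A, lf)) = [numLoc A] := rfl

lemma getD_all_zero {L : List ℤ} (h : ∀ z ∈ L, z = 0) (i : ℕ) : L.getD i 0 = 0 := by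
  rcases lt_or_ge i L.length with hi | hi
  · rw [List.getD_eq_getElem _ _ hi]; exact h _ (L.getElem_mem hi)
  · exact List.getD_eq_default _ _ hi

lemma zerosU_mem {m : ℕ} {z : ℤ} (h : z ∈ zerosU m) : z = 0 := by
  simp [zerosU] at h; omega

lemma zerosU_getD (m i : ℕ) : (zerosU m).getD i 0 = 0 :=
  getD_all_zero (fun _ hz => zerosU_mem hz) i

lemma zerosU_length (m : ℕ) : (zerosU m).length = m := by simp [zerosU]

lemma unitU_getD {m j : ℕ} (hj : j < m) (i : ℕ) :
    (unitU m j).getD i 0 = if i = j then 1 else 0 := by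
  rcases lt_or_ge i (unitU m j).length with hi | hi
  · rw [List.getD_eq_getElem _ _ hi]; simp [unitU]
  · rw [List.getD_eq_default _ _ hi]
    have him : m ≤ i := by simpa [unitU] using hi
    have hij : i ≠ j := fun h => absurd hj (not_lt.2 (h ▸ him))
    simp [hij]

lemma rateOf_discrete {B : GMETA} (hD : Discrete B) (l i : ℕ) : rateOf B l i = 0 := by
  have h : ∀ z ∈ (rates B).getD l [], z = 0 := by
    rcases lt_or_ge l (rates B).length with hl | hl
    · rw [List.getD_eq_getElem _ _ hl]
      exact hD _ (List.getElem_mem hl)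
    · rw [List.getD_eq_default _ _ hl]; simp
  unfold rateOf
  exact getD_all_zero h i

lemma elapse_discrete {B : GMETA} (hD : Discrete B) (l : ℕ) (v : ℕ → ℝ) (t : ℝ) :
    elapseEnergies B l v t = v := by
  funext i; simp [elapseEnergies, rateOf_discrete hD]

lemma elapseClocks_zero (w : ℕ → ℝ) : elapseClocks w 0 = w := by
  funext i; simp [elapseClocks]

lemma resetClocks_nil (w : ℕ → ℝ) : resetClocks [] w = w := by
  funext i; simp [resetClocks]

lemma updateEnergies_zerosU (m : ℕ) (v : ℕ → ℝ) : updateEnergies (zerosU m) v = v := by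
  funext i
  show v i + ((zerosU m).getD i 0 : ℝ) = v i
  rw [zerosU_getD]; simp

lemma updateEnergies_unit {m j : ℕ} (hj : j < m) (v : ℕ → ℝ) :
    updateEnergies (unitU m j) v = fun i => v i + if i = j then 1 else 0 := by
  funext i
  simp only [updateEnergies, unitU_getD hj]
  split <;> simp

lemma validState_mk {B : GMETA} {l : ℕ} {w v : ℕ → ℝ} :
    validState B (l, w, v) ↔
      (l < numLoc B ∧ (∀ i, 0 ≤ w i) ∧ (∀ i, 0 ≤ v i) ∧ satIneqs B w v (invOf B l)) :=
  Iff.rfl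

lemma invOf_g_lt (hlen : (invs A).length = numLoc A) {l : ℕ} (hl : l < numLoc A) :
    invOf (gFun (A, lf)) l = invOf A l := by
  unfold invOf
  rw [invs_g, List.getD_append _ _ _ _ (by omega)]

lemma triple_nil_getD (k : ℕ) : ([[], [], []] : List (List Ineq)).getD k [] = [] := by
  match k with
  | 0 => rfl
  | 1 => rfl
  | 2 => rfl
  | (n+3) => rfl

lemma invOf_g_new (hlen : (invs A).length = numLoc A) {l : ℕ} (hl : numLoc A ≤ l) :
    invOf (gFun (A, lf)) l = [] := by
  unfold invOf
  rw [invs_g, List.getD_append_right _ _ _ _ (by omega), triple_nil_getD]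

lemma validState_g (hlen : (invs A).length = numLoc A) {l : ℕ} {w v : ℕ → ℝ}
    (hl : l < numLoc A) :
    validState (gFun (A, lf)) (l, w, v) ↔ validState A (l, w, v) := by
  rw [validState_mk, validState_mk, invOf_g_lt hlen hl]
  constructor
  · rintro ⟨h1, h2, h3, h4⟩
    exact ⟨hl, h2, h3, h4⟩
  · rintro ⟨h1, h2, h3, h4⟩
    exact ⟨show l < numLoc A + 3 by omega, h2, h3, h4⟩

lemma discrete_g (hD : Discrete A) : Discrete (gFun (A, lf)) := by
  intro r hr
  rw [rates_g] at hr
  rcases List.mem_append.1 hr with hr | hr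
  · exact hD r hr
  · have : r = zerosU (numEn A) := by simpa using hr
    subst this
    exact fun z hz => zerosU_mem hz

lemma cg_g (hCG : ClockGuardsOnly A) : ClockGuardsOnly (gFun (A, lf)) := by
  constructor
  · intro g hg
    rw [invs_g] at hg
    rcases List.mem_append.1 hg with hg | hg
    · intro q hq; exact hCG.1 g hg q hq
    · have : g = [] := by simpa using hg
      subst this; intro q hq; simp at hq
  · intro e he
    have he' : e ∈ extEdges A lf := he
    unfold extEdges at he'
    rcases List.mem_append.1 he' with he' | he'
    · intro q hq; exact hCG.2 e he' q hq
    · have hge : edgeGuard e = [] := by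
        rcases List.mem_cons.1 he' with rfl | he'
        · rfl
        rcases List.mem_append.1 he' with he' | he'
        · rcases List.mem_map.1 he' with ⟨j, _, rfl⟩; rfl
        · have : e = ePFE A ∨ e = eLFE A lf ∨ e = e1FE A := by simpa using he'
          rcases this with rfl | rfl | rfl <;> rfl
      rw [hge]; intro q hq; simp at hq

lemma mem_extEdges {e : Edge} (he : e ∈ extEdges A lf) :
    e ∈ edges A ∨ e = e0E A ∨ (∃ j < numEn A, e = eLoopE A j) ∨ e = ePFE A ∨
      e = eLFE A lf ∨ e = e1FE A := by
  unfold extEdges at he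
  rcases List.mem_append.1 he with he | he
  · exact Or.inl he
  rcases List.mem_cons.1 he with rfl | he
  · exact Or.inr (Or.inl rfl)
  rcases List.mem_append.1 he with he | he
  · rcases List.mem_map.1 he with ⟨j, hj, rfl⟩
    exact Or.inr (Or.inr (Or.inl ⟨j, List.mem_range.1 hj, rfl⟩))
  · have : e = ePFE A ∨ e = eLFE A lf ∨ e = e1FE A := by simpa using he
    rcases this with rfl | rfl | rfl
    · exact Or.inr (Or.inr (Or.inr (Or.inl rfl)))
    · exact Or.inr (Or.inr (Or.inr (Or.inr (Or.inl rfl))))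
    · exact Or.inr (Or.inr (Or.inr (Or.inr (Or.inr rfl))))

lemma wf_new_edge {s t : ℕ} {U : List ℤ} (hs : s < numLoc A + 3) (ht : t < numLoc A + 3)
    (hsne : s ≠ numLoc A + 2) (hU : U.length = numEn A) :
    edgeSrc ((s, [], none, [], U, t) : Edge) < numLoc (gFun (A, lf)) ∧
    edgeTgt ((s, [], none, [], U, t) : Edge) < numLoc (gFun (A, lf)) ∧
    edgeSrc ((s, [], none, [], U, t) : Edge) ∉ finalLocs (gFun (A, lf)) ∧
    (∀ a, edgeAct ((s, [], none, [], U, t) : Edge) = some a → a < numAct (gFun (A, lf))) ∧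
    (∀ q ∈ edgeGuard ((s, [], none, [], U, t) : Edge),
      q.1 < numClk (gFun (A, lf)) + numEn (gFun (A, lf))) ∧
    (∀ x ∈ edgeResets ((s, [], none, [], U, t) : Edge), x < numClk (gFun (A, lf))) ∧
    (edgeUpdates ((s, [], none, [], U, t) : Edge)).length = numEn (gFun (A, lf)) := by
  refine ⟨hs, ht, ?_, ?_, ?_, ?_, hU⟩
  · show s ∉ ([numLoc A + 2] : List ℕ)
    simpa using hsne
  · intro a ha
    simp [edgeAct] at ha
  · intro q hq
    simp [edgeGuard] at hq
  · intro x hx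
    simp [edgeResets] at hx

lemma wf_g (hWF : WellFormed A) (hlf : lf < numLoc A) : WellFormed (gFun (A, lf)) := by
  obtain ⟨w1, w2, w3, w4, w5, w6, w7, w8, w9, w10⟩ := hWF
  refine ⟨?_, ?_, ?_, ?_, ?_, ?_, ?_, ?_, ?_, ?_⟩
  · show 0 < numLoc A + 3; omega
  · show ([numLoc A] : List ℕ) ≠ []; simp
  · show ([numLoc A + 2] : List ℕ) ≠ []; simp
  · intro l hl
    have : l = numLoc A := by simpa [privLocs_g] using hl
    subst this; show numLoc A < numLoc A + 3; omega
  · intro l hl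
    have : l = numLoc A + 2 := by simpa [finalLocs_g] using hl
    subst this
    refine ⟨show numLoc A + 2 < numLoc A + 3 by omega, ?_⟩
    show numLoc A + 2 ∉ ([numLoc A] : List ℕ); simp
  · show (invs A ++ [[], [], []]).length = numLoc A + 3
    simp [w6]
  · intro g hg q hq
    rw [invs_g] at hg
    rcases List.mem_append.1 hg with hg | hg
    · exact w7 g hg q hq
    · have : g = [] := by simpa using hg
      subst this; simp at hq
  · show (rates A ++ _).length = numLoc A + 3
    simp [w8]
  · intro r hr
    rw [rates_g] at hr
    rcases List.mem_append.1 hr with hr | hr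
    · exact w9 r hr
    · have : r = zerosU (numEn A) := by simpa using hr
      subst this
      show (zerosU (numEn A)).length = numEn A
      exact zerosU_length _
  · intro e he
    have he' : e ∈ extEdges A lf := he
    rcases mem_extEdges he' with hold | rfl | ⟨j, hj, rfl⟩ | rfl | rfl | rfl
    · obtain ⟨g1, g2, g3, g4, g5, g6, g7⟩ := w10 e hold
      refine ⟨show edgeSrc e < numLoc A + 3 by omega,
        show edgeTgt e < numLoc A + 3 by omega, ?_, g4, g5, g6, g7⟩
      show edgeSrc e ∉ ([numLoc A + 2] : List ℕ)
      simp; omega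
    · exact wf_new_edge (by omega) (by omega) (by omega) (zerosU_length _)
    · exact wf_new_edge (by omega) (by omega) (by omega) (by simp [unitU])
    · exact wf_new_edge (by omega) (by omega) (by omega) (zerosU_length _)
    · exact wf_new_edge (by omega) (by omega) (by omega) (zerosU_length _)
    · exact wf_new_edge (by omega) (by omega) (by omega) (zerosU_length _)

/-! ### Generic trace lemmas -/

lemma trace_congr {B : GMETA} {x y : EState × ℝ} {tl : List (EState × ℝ)}
    (h : Trace B (x :: tl)) (e : x = y) : Trace B (y :: tl) := e ▸ h

lemma trace_ne_nil {B : GMETA} {tr : List (EState × ℝ)} (h : Trace B tr) :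
    ∃ x tl, tr = x :: tl := by
  cases h with
  | init _ => exact ⟨_, _, rfl⟩
  | step t e htr h0 hval hmem hsrc hg hvt => exact ⟨_, _, rfl⟩

lemma trace_valid_mem {B : GMETA} {tr : List (EState × ℝ)} (h : Trace B tr) :
    ∀ q ∈ tr, validState B q.1 := by
  induction h with
  | init hv =>
      intro q hq
      have : q = (initState, 0) := by simpa using hq
      subst this; exact hv
  | step t e htr h0 hval hmem hsrc hg hvt ih =>
      intro q hq
      rcases List.mem_cons.1 hq with rfl | hq
      · exact hvt
      · exact ih q hq

lemma trace_time_nonneg {B : GMETA} {tr : List (EState × ℝ)} (h : Trace B tr) :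
    ∀ q ∈ tr, 0 ≤ q.2 := by
  induction h with
  | init hv =>
      intro q hq
      have : q = (initState, 0) := by simpa using hq
      subst this; exact le_rfl
  | @step tr l w v τ t e htr h0 hval hmem hsrc hg hvt ih =>
      intro q hq
      rcases List.mem_cons.1 hq with rfl | hq
      · have hτ : (0:ℝ) ≤ τ := ih _ (List.mem_cons_self)
        show (0:ℝ) ≤ τ + t
        linarith
      · exact ih q hq

lemma trace_init_valid {B : GMETA} {tr : List (EState × ℝ)} (h : Trace B tr) :
    validState B initState := by
  induction h with
  | init hv => exact hv
  | step t e htr h0 hval hmem hsrc hg hvt ih => exact ih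

lemma trace_mem {B : GMETA} {tr : List (EState × ℝ)} (h : Trace B tr) :
    ∀ q ∈ tr, ∃ tl, Trace B (q :: tl) := by
  induction h with
  | init hv =>
      intro q hq
      have : q = (initState, 0) := by simpa using hq
      subst this; exact ⟨[], .init hv⟩
  | step t e htr h0 hval hmem hsrc hg hvt ih =>
      intro q hq
      rcases List.mem_cons.1 hq with rfl | hq
      · exact ⟨_, .step t e htr h0 hval hmem hsrc hg hvt⟩
      · exact ih q hq

lemma trace_energy_int {B : GMETA} (hD : Discrete B)
    (hU : ∀ e ∈ edges B, (edgeUpdates e).length = numEn B)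
    {tr : List (EState × ℝ)} (h : Trace B tr) :
    (∀ i, ∃ z : ℤ, tr.headI.1.2.2 i = (z : ℝ)) ∧
      (∀ i, numEn B ≤ i → tr.headI.1.2.2 i = 0) := by
  induction h with
  | init _ =>
      constructor
      · exact fun i => ⟨0, by simp [initState]⟩
      · intro i _; simp [initState]
  | @step tr l w v τ t e htr h0 hval hmem hsrc hg hvt ih =>
      constructor
      · intro i
        obtain ⟨z, hz⟩ := ih.1 i
        refine ⟨z + (edgeUpdates e).getD i 0, ?_⟩
        show updateEnergies (edgeUpdates e) (elapseEnergies B l v t) i = _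
        rw [elapse_discrete hD]
        show v i + ((edgeUpdates e).getD i 0 : ℝ) = _
        have hz' : v i = (z : ℝ) := hz
        rw [hz']; push_cast; ring
      · intro i hi
        have h0' : v i = 0 := ih.2 i hi
        clear hval hg hvt
        show updateEnergies (edgeUpdates e) (elapseEnergies B l v t) i = 0
        rw [elapse_discrete hD]
        have hgd : (edgeUpdates e).getD i 0 = 0 :=
          List.getD_eq_default _ _ (by rw [hU e hmem]; exact hi)
        show v i + ((edgeUpdates e).getD i 0 : ℝ) = 0
        rw [h0', hgd]; simp

/-! ### Transfer of traces between `A` and `gFun (A, lf)` -/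

lemma trace_up (hWF : WellFormed A) (hD : Discrete A) {tr : List (EState × ℝ)}
    (h : Trace A tr) : Trace (gFun (A, lf)) tr := by
  obtain ⟨w1, w2, w3, w4, w5, w6, w7, w8, w9, w10⟩ := id hWF
  have hD' : Discrete (gFun (A, lf)) := discrete_g hD
  induction h with
  | init hv => exact .init ((validState_g w6 w1).2 hv)
  | @step tr l w v τ t e htr h0 hval hmem hsrc hg hvt ih =>
      have hl : l < numLoc A := hsrc ▸ (w10 e hmem).1
      have htgt : edgeTgt e < numLoc A := (w10 e hmem).2.1
      have hrw : ∀ (v : ℕ → ℝ) t, elapseEnergies A l v t = v :=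
        fun v t => elapse_discrete hD l v t
      have hrw' : ∀ (v : ℕ → ℝ) t, elapseEnergies (gFun (A, lf)) l v t = v :=
        fun v t => elapse_discrete hD' l v t
      simp only [hrw] at hval hg hvt ⊢
      have hstep := Trace.step (A := gFun (A, lf)) t e ih h0
        (fun t' h1 h2 => by rw [hrw']; exact (validState_g w6 hl).2 (hval t' h1 h2))
        (List.mem_append_left _ hmem) hsrc
        (by rw [hrw']; exact hg)
        (by rw [hrw']; exact (validState_g w6 htgt).2 hvt)
      simpa only [hrw'] using hstep

lemma pub_reach (hWF : WellFormed A) (hD : Discrete A) {tr : List (EState × ℝ)}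
    (h : Trace (gFun (A, lf)) tr) :
    (∀ q ∈ tr, q.1.1 ≠ numLoc A) →
      ((Trace A tr ∧ ∀ q ∈ tr, q.1.1 < numLoc A) ∨ ReachLoc A lf) := by
  obtain ⟨w1, w2, w3, w4, w5, w6, w7, w8, w9, w10⟩ := id hWF
  have hD' : Discrete (gFun (A, lf)) := discrete_g hD
  induction h with
  | init hv =>
      intro _
      left
      refine ⟨.init ((validState_g w6 w1).1 hv), ?_⟩
      intro q hq
      have : q = (initState, 0) := by simpa using hq
      subst this; exact w1
  | @step tr l w v τ t e htr h0 hval hmem hsrc hg hvt ih =>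
      intro havoid
      have havoid' : ∀ q ∈ ((l, w, v), τ) :: tr, q.1.1 ≠ numLoc A :=
        fun q hq => havoid q (List.mem_cons_of_mem _ hq)
      rcases ih havoid' with ⟨htrA, hlt⟩ | hre
      · have hl : l < numLoc A := hlt _ (List.mem_cons_self)
        have hmem' : e ∈ extEdges A lf := hmem
        rcases mem_extEdges hmem' with hold | rfl | ⟨j, hj, rfl⟩ | rfl | rfl | rfl
        · left
          have htgt : edgeTgt e < numLoc A := (w10 e hold).2.1
          have hrwA : ∀ (v : ℕ → ℝ) t, elapseEnergies A l v t = v :=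
            fun v t => elapse_discrete hD l v t
          have hrwB : ∀ (v : ℕ → ℝ) t, elapseEnergies (gFun (A, lf)) l v t = v :=
            fun v t => elapse_discrete hD' l v t
          simp only [hrwB] at hval hg hvt ⊢
          constructor
          · have hstep := Trace.step (A := A) t e htrA h0
              (fun t' h1 h2 => by rw [hrwA]; exact (validState_g w6 hl).1 (hval t' h1 h2))
              hold hsrc
              (by rw [hrwA]; exact hg)
              (by rw [hrwA]; exact (validState_g w6 htgt).1 hvt)
            simpa only [hrwA] using hstep
          · intro q hq
            rcases List.mem_cons.1 hq with rfl | hq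
            · exact htgt
            · exact hlt q hq
        · exact absurd rfl (havoid _ (List.mem_cons_self))
        · exfalso
          have hx : numLoc A = l := hsrc
          omega
        · exfalso
          have hx : numLoc A = l := hsrc
          omega
        · right
          have hx : lf = l := hsrc
          exact ⟨_, ((l, w, v), τ), htrA, List.mem_cons_self, hx.symm⟩
        · exfalso
          have hx : numLoc A + 1 = l := hsrc
          omega
      · exact Or.inr hre

/-! ### Pumping the private location -/

lemma loop_once (w6 : (invs A).length = numLoc A) (hD' : Discrete (gFun (A, lf)))
    {j : ℕ} (hj : j < numEn A) {w v : ℕ → ℝ} {τ : ℝ} {tl : List (EState × ℝ)}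
    (h : Trace (gFun (A, lf)) (((numLoc A, w, v), τ) :: tl)) :
    Trace (gFun (A, lf)) (((numLoc A, w, fun i => v i + if i = j then 1 else 0), τ)
      :: ((numLoc A, w, v), τ) :: tl) := by
  have hval : validState (gFun (A, lf)) (numLoc A, w, v) :=
    trace_valid_mem h _ (List.mem_cons_self)
  obtain ⟨hv1, hv2, hv3, hv4⟩ := validState_mk.1 hval
  have hrw : ∀ (v : ℕ → ℝ) t, elapseEnergies (gFun (A, lf)) (numLoc A) v t = v :=
    fun v t => elapse_discrete hD' _ v t
  have hmem : eLoopE A j ∈ edges (gFun (A, lf)) :=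
    List.mem_append_right _ (List.mem_cons_of_mem _
      (List.mem_append_left _ (List.mem_map_of_mem (List.mem_range.2 hj))))
  have hinv : invOf (gFun (A, lf)) (numLoc A) = [] := invOf_g_new w6 le_rfl
  have hstep := Trace.step (A := gFun (A, lf)) 0 (eLoopE A j) h le_rfl
    (fun t' h1 h2 => by
      have ht' : t' = 0 := le_antisymm h2 h1
      subst ht'
      rw [hrw, elapseClocks_zero]
      exact hval)
    hmem rfl
    (by intro q hq; simp [eLoopE, edgeGuard] at hq)
    (by
      show validState (gFun (A, lf)) (numLoc A, resetClocks [] (elapseClocks w 0),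
        updateEnergies (unitU (numEn A) j) (elapseEnergies (gFun (A, lf)) (numLoc A) v 0))
      rw [elapseClocks_zero, resetClocks_nil, hrw, updateEnergies_unit hj, validState_mk]
      refine ⟨hv1, hv2, ?_, ?_⟩
      · intro i
        have h3 := hv3 i
        by_cases hij : i = j
        · subst hij; simp; linarith
        · simp [hij]; exact h3
      · rw [hinv]; intro q hq; simp at hq)
  refine trace_congr hstep ?_
  show ((numLoc A, resetClocks [] (elapseClocks w 0),
    updateEnergies (unitU (numEn A) j) (elapseEnergies (gFun (A, lf)) (numLoc A) v 0)),
      τ + 0) = _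
  rw [elapseClocks_zero, resetClocks_nil, hrw, updateEnergies_unit hj, add_zero]

lemma loop_many (w6 : (invs A).length = numLoc A) (hD' : Discrete (gFun (A, lf)))
    {j : ℕ} (hj : j < numEn A) (c : ℕ) :
    ∀ {w v : ℕ → ℝ} {τ : ℝ} {tl : List (EState × ℝ)},
      Trace (gFun (A, lf)) (((numLoc A, w, v), τ) :: tl) →
      ∃ tl', Trace (gFun (A, lf))
        (((numLoc A, w, fun i => v i + if i = j then (c : ℝ) else 0), τ) :: tl') := by
  induction c with
  | zero =>
      intro w v τ tl h
      refine ⟨tl, trace_congr h ?_⟩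
      refine Prod.ext (Prod.ext rfl (Prod.ext rfl ?_)) rfl
      funext i; simp
  | succ c ihc =>
      intro w v τ tl h
      obtain ⟨tl', h'⟩ := ihc h
      refine ⟨_, trace_congr (loop_once w6 hD' hj h') ?_⟩
      refine Prod.ext (Prod.ext rfl (Prod.ext rfl ?_)) rfl
      funext i
      by_cases hij : i = j <;> simp [hij] <;> push_cast <;> ring

lemma pump_all (w6 : (invs A).length = numLoc A) (hD' : Discrete (gFun (A, lf)))
    (k : ℕ → ℕ) :
    ∀ j, j ≤ numEn A → ∀ {w v : ℕ → ℝ} {τ : ℝ} {tl : List (EState × ℝ)},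
      Trace (gFun (A, lf)) (((numLoc A, w, v), τ) :: tl) →
      ∃ tl', Trace (gFun (A, lf))
        (((numLoc A, w, fun i => v i + if i < j then (k i : ℝ) else 0), τ) :: tl') := by
  intro j
  induction j with
  | zero =>
      intro _ w v τ tl h
      refine ⟨tl, trace_congr h ?_⟩
      refine Prod.ext (Prod.ext rfl (Prod.ext rfl ?_)) rfl
      funext i; simp
  | succ j ihj =>
      intro hj w v τ tl h
      obtain ⟨tl', h'⟩ := ihj (by omega) h
      obtain ⟨tl'', h''⟩ := loop_many w6 hD' (show j < numEn A by omega) (k j) h'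
      refine ⟨tl'', trace_congr h'' ?_⟩
      refine Prod.ext (Prod.ext rfl (Prod.ext rfl ?_)) rfl
      funext i
      rcases lt_trichotomy i j with hc | rfl | hc
      · have h1 : i < j + 1 := by omega
        have h2 : i ≠ j := by omega
        simp [hc, h1, h2]
      · simp
      · have h1 : ¬ i < j := by omega
        have h2 : i ≠ j := by omega
        have h3 : ¬ i < j + 1 := by omega
        simp [h1, h2, h3]

/-! ### Computability of the reduction -/

lemma gFun_primrec : Primrec gFun := by
  have hA : Primrec (fun p : GMETA × ℕ => p.1) := Primrec.fst
  have hnAct : Primrec (fun p : GMETA × ℕ => numAct p.1) := Primrec.fst.comp hA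
  have hr1 : Primrec (fun p : GMETA × ℕ => p.1.2) := Primrec.snd.comp hA
  have hnLoc : Primrec (fun p : GMETA × ℕ => numLoc p.1) := Primrec.fst.comp hr1
  have hr2 : Primrec (fun p : GMETA × ℕ => p.1.2.2) := Primrec.snd.comp hr1
  have hnClk : Primrec (fun p : GMETA × ℕ => numClk p.1) := Primrec.fst.comp hr2
  have hr3 : Primrec (fun p : GMETA × ℕ => p.1.2.2.2) := Primrec.snd.comp hr2
  have hnEn : Primrec (fun p : GMETA × ℕ => numEn p.1) := Primrec.fst.comp hr3
  have hr4 : Primrec (fun p : GMETA × ℕ => p.1.2.2.2.2) := Primrec.snd.comp hr3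
  have hr5 : Primrec (fun p : GMETA × ℕ => p.1.2.2.2.2.2) := Primrec.snd.comp hr4
  have hr6 : Primrec (fun p : GMETA × ℕ => p.1.2.2.2.2.2.2) := Primrec.snd.comp hr5
  have hinvs : Primrec (fun p : GMETA × ℕ => invs p.1) := Primrec.fst.comp hr6
  have hr7 : Primrec (fun p : GMETA × ℕ => p.1.2.2.2.2.2.2.2) := Primrec.snd.comp hr6
  have hrates : Primrec (fun p : GMETA × ℕ => rates p.1) := Primrec.fst.comp hr7
  have hedges : Primrec (fun p : GMETA × ℕ => edges p.1) := Primrec.snd.comp hr7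
  have hlfp : Primrec (fun p : GMETA × ℕ => p.2) := Primrec.snd
  have hnLoc1 : Primrec (fun p : GMETA × ℕ => numLoc p.1 + 1) := Primrec.succ.comp hnLoc
  have hnLoc2 : Primrec (fun p : GMETA × ℕ => numLoc p.1 + 2) := Primrec.succ.comp hnLoc1
  have hnLoc3 : Primrec (fun p : GMETA × ℕ => numLoc p.1 + 3) := Primrec.succ.comp hnLoc2
  have hzeros : Primrec (fun p : GMETA × ℕ => zerosU (numEn p.1)) :=
    Primrec.list_map (Primrec.list_range.comp hnEn) (Primrec₂.const (0 : ℤ))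
  have he0 : Primrec (fun p : GMETA × ℕ => e0E p.1) :=
    Primrec.pair (Primrec.const 0) (Primrec.pair (Primrec.const ([] : List Ineq))
      (Primrec.pair (Primrec.const (none : Option ℕ))
        (Primrec.pair (Primrec.const ([] : List ℕ)) (Primrec.pair hzeros hnLoc))))
  have hnq : Primrec (fun q : (GMETA × ℕ) × ℕ => numLoc q.1.1) := hnLoc.comp Primrec.fst
  have hmq : Primrec (fun q : (GMETA × ℕ) × ℕ => numEn q.1.1) := hnEn.comp Primrec.fst
  have hpred : PrimrecPred (fun x : ((GMETA × ℕ) × ℕ) × ℕ => x.2 = x.1.2) :=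
    Primrec.eq.comp Primrec.snd (Primrec.snd.comp Primrec.fst)
  have hunit : Primrec (fun q : (GMETA × ℕ) × ℕ => unitU (numEn q.1.1) q.2) :=
    Primrec.list_map (Primrec.list_range.comp hmq)
      (Primrec.ite hpred (Primrec.const (1 : ℤ)) (Primrec.const (0 : ℤ)))
  have hloopf : Primrec₂ (fun (p : GMETA × ℕ) (j : ℕ) => eLoopE p.1 j) :=
    Primrec.pair hnq (Primrec.pair (Primrec.const ([] : List Ineq))
      (Primrec.pair (Primrec.const (none : Option ℕ))
        (Primrec.pair (Primrec.const ([] : List ℕ)) (Primrec.pair hunit hnq))))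
  have hloops : Primrec (fun p : GMETA × ℕ => (List.range (numEn p.1)).map (eLoopE p.1)) :=
    Primrec.list_map (Primrec.list_range.comp hnEn) hloopf
  have hePF : Primrec (fun p : GMETA × ℕ => ePFE p.1) :=
    Primrec.pair hnLoc (Primrec.pair (Primrec.const ([] : List Ineq))
      (Primrec.pair (Primrec.const (none : Option ℕ))
        (Primrec.pair (Primrec.const ([] : List ℕ)) (Primrec.pair hzeros hnLoc2))))
  have heLF : Primrec (fun p : GMETA × ℕ => eLFE p.1 p.2) :=
    Primrec.pair hlfp (Primrec.pair (Primrec.const ([] : List Ineq))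
      (Primrec.pair (Primrec.const (none : Option ℕ))
        (Primrec.pair (Primrec.const ([] : List ℕ)) (Primrec.pair hzeros hnLoc1))))
  have he1F : Primrec (fun p : GMETA × ℕ => e1FE p.1) :=
    Primrec.pair hnLoc1 (Primrec.pair (Primrec.const ([] : List Ineq))
      (Primrec.pair (Primrec.const (none : Option ℕ))
        (Primrec.pair (Primrec.const ([] : List ℕ)) (Primrec.pair hzeros hnLoc2))))
  have htail : Primrec (fun p : GMETA × ℕ => [ePFE p.1, eLFE p.1 p.2, e1FE p.1]) :=
    Primrec.list_cons.comp hePF (Primrec.list_cons.comp heLF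
      (Primrec.list_cons.comp he1F (Primrec.const ([] : List Edge))))
  have hnew : Primrec (fun p : GMETA × ℕ =>
      e0E p.1 :: ((List.range (numEn p.1)).map (eLoopE p.1) ++ [ePFE p.1, eLFE p.1 p.2, e1FE p.1])) :=
    Primrec.list_cons.comp he0 (Primrec.list_append.comp hloops htail)
  have hext : Primrec (fun p : GMETA × ℕ => extEdges p.1 p.2) :=
    Primrec.list_append.comp hedges hnew
  have hinvs' : Primrec (fun p : GMETA × ℕ => invs p.1 ++ ([[], [], []] : List (List Ineq))) :=
    Primrec.list_append.comp hinvs (Primrec.const _)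
  have htriple : Primrec (fun p : GMETA × ℕ =>
      [zerosU (numEn p.1), zerosU (numEn p.1), zerosU (numEn p.1)]) :=
    Primrec.list_cons.comp hzeros (Primrec.list_cons.comp hzeros
      (Primrec.list_cons.comp hzeros (Primrec.const ([] : List (List ℤ)))))
  have hrates' : Primrec (fun p : GMETA × ℕ =>
      rates p.1 ++ [zerosU (numEn p.1), zerosU (numEn p.1), zerosU (numEn p.1)]) :=
    Primrec.list_append.comp hrates htriple
  have hpriv : Primrec (fun p : GMETA × ℕ => ([numLoc p.1] : List ℕ)) :=
    Primrec.list_cons.comp hnLoc (Primrec.const ([] : List ℕ))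
  have hfin : Primrec (fun p : GMETA × ℕ => ([numLoc p.1 + 2] : List ℕ)) :=
    Primrec.list_cons.comp hnLoc2 (Primrec.const ([] : List ℕ))
  exact Primrec.pair hnAct (Primrec.pair hnLoc3 (Primrec.pair hnClk (Primrec.pair hnEn
    (Primrec.pair hpriv (Primrec.pair hfin (Primrec.pair hinvs'
      (Primrec.pair hrates' hext)))))))

end Reduction

/-- Every discrete META `A` with a distinguished location `lf` can be
effectively extended to a discrete META `A'` such that `A'` is ∃-ET-EN-opaque iff `lf`
is reachable in `A`.  Hence reachability in discrete METAs reduces to ∃-ET-EN-opacity. -/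
theorem reachability_reduces_to_exETENOpacity :
    ∃ g : GMETA × ℕ → GMETA, Computable g ∧
      ∀ (A : GMETA) (lf : ℕ),
        WellFormed A → Discrete A → ClockGuardsOnly A → lf < numLoc A →
        WellFormed (g (A, lf)) ∧ Discrete (g (A, lf)) ∧ ClockGuardsOnly (g (A, lf)) ∧
          (ETENOpaque Var3.ex (g (A, lf)) ↔ ReachLoc A lf) := by
  classical
  refine ⟨gFun, gFun_primrec.to_comp, ?_⟩
  intro A lf hWF hD hCG hlf
  obtain ⟨w1, w2, w3, w4, w5, w6, w7, w8, w9, w10⟩ := id hWF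
  have hD' : Discrete (gFun (A, lf)) := discrete_g hD
  have hWF' : WellFormed (gFun (A, lf)) := wf_g hWF hlf
  refine ⟨hWF', hD', cg_g hCG, ?_⟩
  constructor
  · -- opacity implies reachability
    rintro ⟨⟨d, ev⟩, hprv, hpb⟩
    obtain ⟨tru, hpubrun, hdu, hevu⟩ := hpb
    obtain ⟨htru, hfin, hnp⟩ := hpubrun
    have havoid : ∀ q ∈ tru, q.1.1 ≠ numLoc A := by
      intro q hq hqn
      exact hnp q hq (by rw [hqn]; exact List.mem_cons_self)
    rcases pub_reach hWF hD htru havoid with ⟨htrA, hlt⟩ | hre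
    · exfalso
      obtain ⟨x, tl, rfl⟩ := trace_ne_nil htru
      have hx : x.1.1 < numLoc A := hlt x (List.mem_cons_self)
      have hfin' : x.1.1 = numLoc A + 2 := by
        have : runLoc (x :: tl) ∈ ([numLoc A + 2] : List ℕ) := hfin
        simpa [runLoc] using this
      omega
    · exact hre
  · -- reachability implies opacity
    rintro ⟨tr0, q, htr0, hq, hqlf⟩
    obtain ⟨tl0, htl0⟩ := trace_mem htr0 q hq
    obtain ⟨⟨lq, w, v⟩, τ⟩ := q
    have hlq : lf = lq := (hqlf : lq = lf).symm
    subst hlq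
    -- facts about the reaching state
    have hvalq : validState A (lf, w, v) :=
      trace_valid_mem htl0 _ (List.mem_cons_self)
    obtain ⟨hlf2, hw0, hv0, hinv0⟩ := validState_mk.1 hvalq
    have hτ0 : (0:ℝ) ≤ τ := trace_time_nonneg htl0 _ (List.mem_cons_self)
    have hUlen : ∀ e ∈ edges A, (edgeUpdates e).length = numEn A :=
      fun e he => (w10 e he).2.2.2.2.2.2
    have hint := trace_energy_int hD hUlen htl0
    have hintv : ∀ i, ∃ z : ℤ, v i = (z : ℝ) := hint.1
    have hvz : ∀ i, numEn A ≤ i → v i = 0 := hint.2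
    have hknat : ∀ i, ∃ c : ℕ, v i = (c : ℝ) := by
      intro i
      obtain ⟨z, hz⟩ := hintv i
      have hz0 : (0:ℝ) ≤ (z : ℝ) := hz ▸ hv0 i
      have hz0' : 0 ≤ z := by exact_mod_cast hz0
      refine ⟨z.toNat, ?_⟩
      rw [hz]
      exact_mod_cast (Int.toNat_of_nonneg hz0').symm
    choose k hkk using hknat
    have hrwE : ∀ (l : ℕ) (v : ℕ → ℝ) t, elapseEnergies (gFun (A, lf)) l v t = v :=
      fun l v t => elapse_discrete hD' l v t
    -- public run: embed the reaching run, then go through l1 to the final location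
    have htl0' : Trace (gFun (A, lf)) (((lf, w, v), τ) :: tl0) := trace_up hWF hD htl0
    have hvalBlf : validState (gFun (A, lf)) (lf, w, v) := (validState_g w6 hlf).2 hvalq
    have hmemL : eLFE A lf ∈ edges (gFun (A, lf)) :=
      List.mem_append_right _ (List.mem_cons_of_mem _ (List.mem_append_right _ (by simp)))
    have s1 := Trace.step (A := gFun (A, lf)) 0 (eLFE A lf) htl0' le_rfl
      (fun t' h1 h2 => by
        have ht' : t' = 0 := le_antisymm h2 h1
        subst ht'
        rw [hrwE, elapseClocks_zero]
        exact hvalBlf)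
      hmemL rfl
      (by intro qq hqq; simp [eLFE, edgeGuard] at hqq)
      (by
        show validState (gFun (A, lf)) (numLoc A + 1, resetClocks [] (elapseClocks w 0),
          updateEnergies (zerosU (numEn A)) (elapseEnergies (gFun (A, lf)) lf v 0))
        rw [elapseClocks_zero, resetClocks_nil, hrwE, updateEnergies_zerosU, validState_mk]
        refine ⟨show numLoc A + 1 < numLoc A + 3 by omega, hw0, hv0, ?_⟩
        rw [invOf_g_new w6 (by omega)]
        intro qq hqq; simp at hqq)
    have s1' : Trace (gFun (A, lf))
        (((numLoc A + 1, w, v), τ) :: ((lf, w, v), τ) :: tl0) := by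
      refine trace_congr s1 ?_
      show ((numLoc A + 1, resetClocks [] (elapseClocks w 0),
        updateEnergies (zerosU (numEn A)) (elapseEnergies (gFun (A, lf)) lf v 0)), τ + 0) = _
      rw [elapseClocks_zero, resetClocks_nil, hrwE, updateEnergies_zerosU, add_zero]
    have hvalB1 : validState (gFun (A, lf)) (numLoc A + 1, w, v) := by
      rw [validState_mk]
      refine ⟨show numLoc A + 1 < numLoc A + 3 by omega, hw0, hv0, ?_⟩
      rw [invOf_g_new w6 (by omega)]
      intro qq hqq; simp at hqq
    have hmem1F : e1FE A ∈ edges (gFun (A, lf)) :=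
      List.mem_append_right _ (List.mem_cons_of_mem _ (List.mem_append_right _ (by simp)))
    have s2 := Trace.step (A := gFun (A, lf)) 0 (e1FE A) s1' le_rfl
      (fun t' h1 h2 => by
        have ht' : t' = 0 := le_antisymm h2 h1
        subst ht'
        rw [hrwE, elapseClocks_zero]
        exact hvalB1)
      hmem1F rfl
      (by intro qq hqq; simp [e1FE, edgeGuard] at hqq)
      (by
        show validState (gFun (A, lf)) (numLoc A + 2, resetClocks [] (elapseClocks w 0),
          updateEnergies (zerosU (numEn A)) (elapseEnergies (gFun (A, lf)) (numLoc A + 1) v 0))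
        rw [elapseClocks_zero, resetClocks_nil, hrwE, updateEnergies_zerosU, validState_mk]
        refine ⟨show numLoc A + 2 < numLoc A + 3 by omega, hw0, hv0, ?_⟩
        rw [invOf_g_new w6 (by omega)]
        intro qq hqq; simp at hqq)
    have s2' : Trace (gFun (A, lf)) (((numLoc A + 2, w, v), τ) ::
        ((numLoc A + 1, w, v), τ) :: ((lf, w, v), τ) :: tl0) := by
      refine trace_congr s2 ?_
      show ((numLoc A + 2, resetClocks [] (elapseClocks w 0),
        updateEnergies (zerosU (numEn A))
          (elapseEnergies (gFun (A, lf)) (numLoc A + 1) v 0)), τ + 0) = _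
      rw [elapseClocks_zero, resetClocks_nil, hrwE, updateEnergies_zerosU, add_zero]
    have hpub : PubRun (gFun (A, lf)) (((numLoc A + 2, w, v), τ) ::
        ((numLoc A + 1, w, v), τ) :: ((lf, w, v), τ) :: tl0) := by
      refine ⟨s2', ?_, ?_⟩
      · show (numLoc A + 2) ∈ ([numLoc A + 2] : List ℕ)
        exact List.mem_cons_self
      · intro qq hqq
        show qq.1.1 ∉ ([numLoc A] : List ℕ)
        simp only [List.mem_singleton]
        rcases List.mem_cons.1 hqq with rfl | hqq
        · show numLoc A + 2 ≠ numLoc A; omega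
        rcases List.mem_cons.1 hqq with rfl | hqq
        · show numLoc A + 1 ≠ numLoc A; omega
        rcases List.mem_cons.1 hqq with rfl | hqq
        · show lf ≠ numLoc A; omega
        · have := (trace_valid_mem htl0 qq (List.mem_cons_of_mem _ hqq)).1
          omega
    have hinitB : validState (gFun (A, lf)) initState :=
      (validState_g w6 w1).2 (trace_init_valid htl0)
    have p0 : Trace (gFun (A, lf))
        [(((0:ℕ), (fun _ => (0:ℝ)), (fun _ => (0:ℝ))), (0:ℝ))] := Trace.init hinitB
    have hval0B : validState (gFun (A, lf)) ((0:ℕ), (fun _ => (0:ℝ)), (fun _ => (0:ℝ))) :=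
      hinitB
    have hmem0 : e0E A ∈ edges (gFun (A, lf)) :=
      List.mem_append_right _ (List.mem_cons_self)
    have s3 := Trace.step (A := gFun (A, lf)) 0 (e0E A) p0 le_rfl
      (fun t' h1 h2 => by
        have ht' : t' = 0 := le_antisymm h2 h1
        subst ht'
        rw [hrwE, elapseClocks_zero]
        exact hval0B)
      hmem0 rfl
      (by intro qq hqq; simp [e0E, edgeGuard] at hqq)
      (by
        show validState (gFun (A, lf)) (numLoc A,
          resetClocks [] (elapseClocks (fun _ => (0:ℝ)) 0),
          updateEnergies (zerosU (numEn A))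
            (elapseEnergies (gFun (A, lf)) 0 (fun _ => (0:ℝ)) 0))
        rw [elapseClocks_zero, resetClocks_nil, hrwE, updateEnergies_zerosU, validState_mk]
        refine ⟨show numLoc A < numLoc A + 3 by omega, fun i => le_rfl, fun i => le_rfl, ?_⟩
        rw [invOf_g_new w6 le_rfl]
        intro qq hqq; simp at hqq)
    have s3' : Trace (gFun (A, lf)) (((numLoc A, (fun _ => (0:ℝ)), (fun _ => (0:ℝ))), (0:ℝ))
        :: [(((0:ℕ), (fun _ => (0:ℝ)), (fun _ => (0:ℝ))), (0:ℝ))]) := by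
      refine trace_congr s3 ?_
      show ((numLoc A, resetClocks [] (elapseClocks (fun _ => (0:ℝ)) 0),
        updateEnergies (zerosU (numEn A))
          (elapseEnergies (gFun (A, lf)) 0 (fun _ => (0:ℝ)) 0)), (0:ℝ) + 0) = _
      rw [elapseClocks_zero, resetClocks_nil, hrwE, updateEnergies_zerosU, add_zero]
    obtain ⟨tl', s4⟩ := pump_all w6 hD' k (numEn A) le_rfl s3'
    have s4' : Trace (gFun (A, lf)) (((numLoc A, (fun _ => (0:ℝ)),
        fun i => if i < numEn A then (k i : ℝ) else 0), (0:ℝ)) :: tl') := by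
      refine trace_congr s4 ?_
      refine Prod.ext (Prod.ext rfl (Prod.ext rfl ?_)) rfl
      funext i; simp
    have hVnn : ∀ i, (0:ℝ) ≤ if i < numEn A then (k i : ℝ) else 0 := by
      intro i; split
      · exact Nat.cast_nonneg _
      · exact le_rfl
    have hmemPF : ePFE A ∈ edges (gFun (A, lf)) :=
      List.mem_append_right _ (List.mem_cons_of_mem _ (List.mem_append_right _ (by simp)))
    have s5 := Trace.step (A := gFun (A, lf)) τ (ePFE A) s4' hτ0
      (fun t' h1 h2 => by
        rw [hrwE, validState_mk]
        refine ⟨show numLoc A < numLoc A + 3 by omega, ?_, hVnn, ?_⟩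
        · intro i
          show (0:ℝ) ≤ (fun _ => (0:ℝ)) i + t'
          simpa using h1
        · rw [invOf_g_new w6 le_rfl]
          intro qq hqq; simp at hqq)
      hmemPF rfl
      (by intro qq hqq; simp [ePFE, edgeGuard] at hqq)
      (by
        show validState (gFun (A, lf)) (numLoc A + 2,
          resetClocks [] (elapseClocks (fun _ => (0:ℝ)) τ),
          updateEnergies (zerosU (numEn A)) (elapseEnergies (gFun (A, lf)) (numLoc A)
            (fun i => if i < numEn A then (k i : ℝ) else 0) τ))
        rw [resetClocks_nil, hrwE, updateEnergies_zerosU, validState_mk]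
        refine ⟨show numLoc A + 2 < numLoc A + 3 by omega, ?_, hVnn, ?_⟩
        · intro i
          show (0:ℝ) ≤ (fun _ => (0:ℝ)) i + τ
          simpa using hτ0
        · rw [invOf_g_new w6 (by omega)]
          intro qq hqq; simp at hqq)
    have hVv : (fun i => if i < numEn A then (k i : ℝ) else 0) = v := by
      funext i
      by_cases h : i < numEn A
      · rw [if_pos h]; exact (hkk i).symm
      · rw [if_neg h, (hvz i (not_lt.1 h))]
    have s5' : Trace (gFun (A, lf)) (((numLoc A + 2,
        elapseClocks (fun _ => (0:ℝ)) τ, v), τ) :: ((numLoc A, (fun _ => (0:ℝ)),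
        fun i => if i < numEn A then (k i : ℝ) else 0), (0:ℝ)) :: tl') := by
      refine trace_congr s5 ?_
      show ((numLoc A + 2, resetClocks [] (elapseClocks (fun _ => (0:ℝ)) τ),
        updateEnergies (zerosU (numEn A)) (elapseEnergies (gFun (A, lf)) (numLoc A)
          (fun i => if i < numEn A then (k i : ℝ) else 0) τ)), (0:ℝ) + τ) = _
      rw [resetClocks_nil, hrwE, updateEnergies_zerosU, zero_add, hVv]
    have hpriv : PrivRun (gFun (A, lf)) (((numLoc A + 2,
        elapseClocks (fun _ => (0:ℝ)) τ, v), τ) :: ((numLoc A, (fun _ => (0:ℝ)),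
        fun i => if i < numEn A then (k i : ℝ) else 0), (0:ℝ)) :: tl') := by
      refine ⟨s5', ?_, ?_⟩
      · show (numLoc A + 2) ∈ ([numLoc A + 2] : List ℕ)
        exact List.mem_cons_self
      · refine ⟨_, List.mem_cons_of_mem _ (List.mem_cons_self), ?_⟩
        show numLoc A ∈ ([numLoc A] : List ℕ)
        exact List.mem_cons_self
    exact ⟨(τ, v), ⟨_, hpriv, rfl, rfl⟩, ⟨_, hpub, rfl, rfl⟩⟩


end METAOpacity
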